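/- Let 𝓜 be a finite set of n×n row-stochastic matrices such that every finite product of matrices from 𝓜 is ergodic (i.e., some power of the product is entrywise positive, equivalently the product is primitive), and let A(k) be any sequence of elements of 𝓜. Then the products A(k)·A(k−1)···A(1) converge entrywise to a row-stochastic matrix of rank 1. -/

import Mathlib

open Matrix Filter

/-- Row-stochastic matrix: nonnegative entries and row sums equal to 1. -/
def Stochastic {n : ℕ} (A : Matrix (Fin n) (Fin n) ℝ) : Prop :=
  (∀ i j, 0 ≤ A i j) ∧ ∀ i, ∑ j, A i j = 1

/-- There is a walk of length `k` from `i` to `j` in the digraph with edge relation `E`. -/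
def HasWalk {n : ℕ} (E : Fin n → Fin n → Prop) (i j : Fin n) (k : ℕ) : Prop :=
  ∃ f : ℕ → Fin n, f 0 = i ∧ f k = j ∧ ∀ m < k, E (f m) (f (m + 1))

/-- The gcd of the lengths of closed walks at `i` (which all stay inside the strongly
connected component of `i`) is 1.  Equivalently, the component of `i` is aperiodic. -/
def AperiodicAt {n : ℕ} (E : Fin n → Fin n → Prop) (i : Fin n) : Prop :=
  ∀ d : ℕ, (∀ k, 0 < k → HasWalk E i i k → d ∣ k) → d = 1

/-- `backProd A l m = A (l+m) ⬝ A (l+m-1) ⬝ ⋯ ⬝ A (l+1)`, so that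
`backProd A l (k-l)` is the partial product `P(k,l)` and `backProd A 0 k = P(k)`. -/
def backProd {n : ℕ} (A : ℕ → Matrix (Fin n) (Fin n) ℝ) (l : ℕ) : ℕ → Matrix (Fin n) (Fin n) ℝ
  | 0 => 1
  | m + 1 => A (l + m + 1) * backProd A l m

/-- Vector seminorm: sup-norm distance to the line spanned by the all-ones vector. -/
noncomputable def sn {n : ℕ} (x : Fin n → ℝ) : ℝ :=
  ⨅ c : ℝ, ‖x - Function.const (Fin n) c‖

/-- Induced matrix seminorm `‖A‖ = sup { ‖Ax‖/‖x‖ : ‖x‖ ≠ 0 }`. -/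
noncomputable def msn {n : ℕ} (A : Matrix (Fin n) (Fin n) ℝ) : ℝ :=
  sSup {r : ℝ | ∃ x : Fin n → ℝ, sn x ≠ 0 ∧ r = sn (A.mulVec x) / sn x}

/-- `mu P j` = minimum of the positive entries of column `j` of `P`. -/
noncomputable def mu {n : ℕ} (P : Matrix (Fin n) (Fin n) ℝ) (j : Fin n) : ℝ :=
  sInf {v : ℝ | ∃ i, 0 < P i j ∧ P i j = v}

/-- Completely reducible: whenever `A i j > 0` there is a directed walk from `j`
back to `i` in `G(A)`; i.e. no edges between distinct strongly connected components. -/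
def CompRed {n : ℕ} (A : Matrix (Fin n) (Fin n) ℝ) : Prop :=
  ∀ i j, 0 < A i j → ∃ k, HasWalk (fun a b => 0 < A a b) j i k


open scoped Classical

section Aux
variable {n : ℕ}

lemma stoch_one : Stochastic (1 : Matrix (Fin n) (Fin n) ℝ) := by
  constructor
  · intro i j
    by_cases h : i = j <;> simp [Matrix.one_apply, h]
  · intro i; simp [Matrix.one_apply]

lemma stoch_mul {P Q : Matrix (Fin n) (Fin n) ℝ} (hP : Stochastic P) (hQ : Stochastic Q) :
    Stochastic (P * Q) := by
  constructor
  · intro i j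
    rw [Matrix.mul_apply]
    exact Finset.sum_nonneg fun k _ => mul_nonneg (hP.1 i k) (hQ.1 k j)
  · intro i
    simp only [Matrix.mul_apply]
    rw [Finset.sum_comm]
    calc ∑ k, ∑ j, P i k * Q k j = ∑ k, P i k * ∑ j, Q k j := by
          simp [Finset.mul_sum]
      _ = 1 := by simp [hQ.2, hP.2 i]

lemma stoch_list_prod {L : List (Matrix (Fin n) (Fin n) ℝ)} (h : ∀ B ∈ L, Stochastic B) :
    Stochastic L.prod := by
  induction L with
  | nil => simpa using stoch_one
  | cons a t ih =>
    rw [List.prod_cons]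
    exact stoch_mul (h a (by simp)) (ih fun B hB => h B (by simp [hB]))

lemma stoch_pow {P : Matrix (Fin n) (Fin n) ℝ} (hP : Stochastic P) (t : ℕ) :
    Stochastic (P ^ t) := by
  induction t with
  | zero => simpa using stoch_one
  | succ t ih => rw [pow_succ]; exact stoch_mul ih hP

lemma pos_mul_iff {P Q : Matrix (Fin n) (Fin n) ℝ} (hP : ∀ i j, 0 ≤ P i j)
    (hQ : ∀ i j, 0 ≤ Q i j) (i j : Fin n) :
    0 < (P * Q) i j ↔ ∃ k, 0 < P i k ∧ 0 < Q k j := by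
  rw [Matrix.mul_apply]
  constructor
  · intro h
    by_contra hc
    push_neg at hc
    have hz : ∀ k ∈ Finset.univ, P i k * Q k j = 0 := by
      intro k _
      rcases lt_or_eq_of_le (hP i k) with h1 | h1
      · rcases lt_or_eq_of_le (hQ k j) with h2 | h2
        · exact absurd h2 (not_lt.2 (hc k h1))
        · rw [← h2, mul_zero]
      · rw [← h1, zero_mul]
    rw [Finset.sum_eq_zero hz] at h
    exact lt_irrefl 0 h
  · rintro ⟨k, h1, h2⟩
    exact Finset.sum_pos' (fun k _ => mul_nonneg (hP i k) (hQ k j))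
      ⟨k, Finset.mem_univ k, mul_pos h1 h2⟩

lemma row_pos {P : Matrix (Fin n) (Fin n) ℝ} (hP : Stochastic P) (i : Fin n) :
    ∃ k, 0 < P i k := by
  by_contra hc
  push_neg at hc
  have : ∑ j, P i j = 0 := Finset.sum_eq_zero fun k _ => le_antisymm (hc k) (hP.1 i k)
  rw [hP.2 i] at this
  norm_num at this

lemma col_pos {R : Matrix (Fin n) (Fin n) ℝ} (hR : Stochastic R) {m : ℕ} (hm : 1 ≤ m)
    (hpos : ∀ i j, 0 < (R ^ m) i j) (j : Fin n) : ∃ k, 0 < R k j := by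
  obtain ⟨t, rfl⟩ := Nat.exists_eq_add_of_le hm
  have h := hpos j j
  rw [add_comm, pow_succ] at h
  obtain ⟨k, -, hk⟩ := (pos_mul_iff (stoch_pow hR t).1 hR.1 j j).1 h
  exact ⟨k, hk⟩

lemma keyA (M : Finset (Matrix (Fin n) (Fin n) ℝ))
    (hstoch : ∀ B ∈ M, Stochastic B)
    (herg : ∀ L : List (Matrix (Fin n) (Fin n) ℝ), (∀ B ∈ L, B ∈ M) → L ≠ [] →
      ∃ m, 1 ≤ m ∧ ∀ i j, 0 < (L.prod ^ m) i j) :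
    ∃ N, 1 ≤ N ∧ ∀ L : List (Matrix (Fin n) (Fin n) ℝ),
      (∀ B ∈ L, B ∈ M) → L.length = N → ∀ i j, 0 < L.prod i j := by
  set N := Fintype.card (Fin n → Fin n → Bool) + 1 with hN
  refine ⟨N, Nat.le_add_left 1 _, ?_⟩
  intro L hLM hlen i j
  -- stochasticity of sublist products
  have hLs : ∀ B ∈ L, Stochastic B := fun B hB => hstoch B (hLM B hB)
  have htake : ∀ k, Stochastic (L.take k).prod :=
    fun k => stoch_list_prod fun B hB => hLs B (List.take_subset k L hB)
  -- pigeonhole on patterns of prefixes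
  have hcard : Fintype.card (Fin n → Fin n → Bool) < Fintype.card (Fin N) := by
    simp [hN]
  obtain ⟨a, b, hab, hfab⟩ := Fintype.exists_ne_map_eq_of_card_lt
    (fun k : Fin N => fun i j => decide (0 < (L.take (k.1 + 1)).prod i j)) hcard
  wlog hlt : (a : ℕ) < (b : ℕ) generalizing a b
  · have hne : (a : ℕ) ≠ (b : ℕ) := Fin.val_ne_of_ne hab
    exact this b a hab.symm hfab.symm (by omega)
  -- notation
  set Pa := (L.take ((a : ℕ) + 1)).prod with hPa
  have hPas : Stochastic Pa := htake _
  set w := (L.drop ((a : ℕ) + 1)).take ((b : ℕ) - (a : ℕ)) with hw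
  have hwM : ∀ B ∈ w, B ∈ M := fun B hB =>
    hLM B (List.drop_subset _ L (List.take_subset _ _ hB))
  have hwlen : w.length = (b : ℕ) - (a : ℕ) := by
    rw [hw, List.length_take, List.length_drop, hlen]
    have := b.2
    omega
  have hwne : w ≠ [] := by
    intro h
    rw [h] at hwlen
    simp at hwlen
    omega
  set W := w.prod with hW
  have hWs : Stochastic W := stoch_list_prod fun B hB => hstoch B (hwM B hB)
  -- take (b+1) = take (a+1) ++ w
  have hsplit : L.take ((b : ℕ) + 1) = L.take ((a : ℕ) + 1) ++ w := by
    have : (b : ℕ) + 1 = ((a : ℕ) + 1) + ((b : ℕ) - (a : ℕ)) := by omega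
    rw [this, List.take_add]
  -- pattern equality
  have hpat : ∀ i j, 0 < Pa i j ↔ 0 < (Pa * W) i j := by
    intro i j
    have h1 := congrFun (congrFun hfab i) j
    simp only [decide_eq_decide] at h1
    rw [hsplit, List.prod_append] at h1
    exact h1
  -- pattern equality for powers
  have hpow : ∀ t, ∀ i j, 0 < Pa i j ↔ 0 < (Pa * W ^ t) i j := by
    intro t
    induction t with
    | zero => intro i j; simp
    | succ t ih =>
      intro i j
      rw [pow_succ, ← mul_assoc]
      rw [pos_mul_iff (stoch_mul hPas (stoch_pow hWs t)).1 hWs.1]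
      simp only [← ih]
      rw [hpat i j, pos_mul_iff hPas.1 hWs.1]
  -- ergodicity of W
  obtain ⟨m, hm1, hmpos⟩ := herg w hwM hwne
  rw [← hW] at hmpos
  have hPapos : ∀ i j, 0 < Pa i j := by
    intro i j
    refine (hpow m i j).2 ?_
    rw [pos_mul_iff hPas.1 (stoch_pow hWs m).1]
    obtain ⟨k, hk⟩ := row_pos hPas i
    exact ⟨k, hk, hmpos k j⟩
  -- finish: L = take (a+1) ++ drop (a+1)
  set R := (L.drop ((a : ℕ) + 1)).prod with hR
  have hdropM : ∀ B ∈ L.drop ((a : ℕ) + 1), B ∈ M := fun B hB => hLM B (List.drop_subset _ L hB)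
  have hdropne : L.drop ((a : ℕ) + 1) ≠ [] := by
    intro h
    have := congrArg List.length h
    rw [List.length_drop, hlen] at this
    have hb := b.2
    simp at this
    omega
  have hRs : Stochastic R := stoch_list_prod fun B hB => hstoch B (hdropM B hB)
  obtain ⟨m', hm'1, hm'pos⟩ := herg _ hdropM hdropne
  obtain ⟨k, hk⟩ := col_pos hRs hm'1 hm'pos j
  have hLsplit : L.prod = Pa * R := by
    conv_lhs => rw [← List.take_append_drop ((a : ℕ) + 1) L]
    rw [List.prod_append]
  rw [hLsplit, pos_mul_iff hPas.1 hRs.1]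
  exact ⟨k, hPapos i k, hk⟩

lemma backProd_eq_list (A : ℕ → Matrix (Fin n) (Fin n) ℝ) (l m : ℕ) :
    backProd A l m = ((List.range m).reverse.map fun t => A (l + t + 1)).prod := by
  induction m with
  | zero => simp [backProd]
  | succ m ih =>
    rw [List.range_succ, List.reverse_append]
    simp only [List.reverse_cons, List.reverse_nil, List.nil_append, List.cons_append,
      List.map_cons, List.prod_cons]
    rw [show backProd A l (m + 1) = A (l + m + 1) * backProd A l m from rfl, ih]

lemma backProd_add (A : ℕ → Matrix (Fin n) (Fin n) ℝ) (l m : ℕ) :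
    backProd A 0 (l + m) = backProd A l m * backProd A 0 l := by
  induction m with
  | zero => simp [backProd]
  | succ m ih =>
    have h1 : l + (m + 1) = (l + m) + 1 := by ring
    rw [h1]
    rw [show backProd A 0 ((l + m) + 1) = A (0 + (l + m) + 1) * backProd A 0 (l + m) from rfl]
    rw [show backProd A l (m + 1) = A (l + m + 1) * backProd A l m from rfl]
    rw [ih, ← mul_assoc]
    norm_num

lemma backProd_stoch (A : ℕ → Matrix (Fin n) (Fin n) ℝ) (hA : ∀ k, 1 ≤ k → Stochastic (A k))
    (l m : ℕ) : Stochastic (backProd A l m) := by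
  induction m with
  | zero => exact stoch_one
  | succ m ih => exact stoch_mul (hA (l + m + 1) (by omega)) ih

noncomputable def colSup {n : ℕ} [Nonempty (Fin n)] (P : Matrix (Fin n) (Fin n) ℝ)
    (j : Fin n) : ℝ := Finset.univ.sup' Finset.univ_nonempty fun i => P i j

noncomputable def colInf {n : ℕ} [Nonempty (Fin n)] (P : Matrix (Fin n) (Fin n) ℝ)
    (j : Fin n) : ℝ := Finset.univ.inf' Finset.univ_nonempty fun i => P i j

variable [Nonempty (Fin n)]

lemma le_colSup (P : Matrix (Fin n) (Fin n) ℝ) (i j : Fin n) : P i j ≤ colSup P j := by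
  unfold colSup; exact Finset.le_sup' (fun i => P i j) (Finset.mem_univ i)

lemma colInf_le (P : Matrix (Fin n) (Fin n) ℝ) (i j : Fin n) : colInf P j ≤ P i j := by
  unfold colInf; exact Finset.inf'_le (fun i => P i j) (Finset.mem_univ i)

lemma colSup_le {P : Matrix (Fin n) (Fin n) ℝ} {j : Fin n} {a : ℝ} (h : ∀ i, P i j ≤ a) :
    colSup P j ≤ a := by
  unfold colSup; exact Finset.sup'_le _ _ fun i _ => h i

lemma le_colInf {P : Matrix (Fin n) (Fin n) ℝ} {j : Fin n} {a : ℝ} (h : ∀ i, a ≤ P i j) :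
    a ≤ colInf P j := by
  unfold colInf; exact Finset.le_inf' _ _ fun i _ => h i

lemma colInf_le_colSup (P : Matrix (Fin n) (Fin n) ℝ) (j : Fin n) : colInf P j ≤ colSup P j :=
  le_trans (colInf_le P (Classical.arbitrary _) j) (le_colSup P _ j)

lemma colSup_mul_le {Q : Matrix (Fin n) (Fin n) ℝ} (hQ : Stochastic Q)
    (P : Matrix (Fin n) (Fin n) ℝ) (j : Fin n) : colSup (Q * P) j ≤ colSup P j := by
  refine colSup_le fun i => ?_
  rw [Matrix.mul_apply]
  calc ∑ p, Q i p * P p j ≤ ∑ p, Q i p * colSup P j :=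
        Finset.sum_le_sum fun p _ => mul_le_mul_of_nonneg_left (le_colSup P p j) (hQ.1 i p)
    _ = colSup P j := by rw [← Finset.sum_mul, hQ.2 i, one_mul]

lemma le_colInf_mul {Q : Matrix (Fin n) (Fin n) ℝ} (hQ : Stochastic Q)
    (P : Matrix (Fin n) (Fin n) ℝ) (j : Fin n) : colInf P j ≤ colInf (Q * P) j := by
  refine le_colInf fun i => ?_
  rw [Matrix.mul_apply]
  calc colInf P j = ∑ p, Q i p * colInf P j := by rw [← Finset.sum_mul, hQ.2 i, one_mul]
    _ ≤ ∑ p, Q i p * P p j :=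
        Finset.sum_le_sum fun p _ => mul_le_mul_of_nonneg_left (colInf_le P p j) (hQ.1 i p)

lemma contract {Q : Matrix (Fin n) (Fin n) ℝ} (hQ : Stochastic Q) {δ : ℝ}
    (hδ : ∀ i p, δ ≤ Q i p) (P : Matrix (Fin n) (Fin n) ℝ) (j : Fin n) :
    colSup (Q * P) j - colInf (Q * P) j ≤ (1 - n * δ) * (colSup P j - colInf P j) := by
  have hrowQ : ∀ i, ∑ p, (Q i p - δ) = 1 - n * δ := by
    intro i
    rw [Finset.sum_sub_distrib, hQ.2 i, Finset.sum_const, Finset.card_univ, Fintype.card_fin,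
      nsmul_eq_mul]
  set S := ∑ p, P p j with hS
  have hsplit : ∀ i, (Q * P) i j = δ * S + ∑ p, (Q i p - δ) * P p j := by
    intro i
    rw [Matrix.mul_apply, hS, Finset.mul_sum, ← Finset.sum_add_distrib]
    exact Finset.sum_congr rfl fun p _ => by ring
  have hup : colSup (Q * P) j ≤ δ * S + (1 - n * δ) * colSup P j := by
    refine colSup_le fun i => ?_
    rw [hsplit i]
    have : ∑ p, (Q i p - δ) * P p j ≤ (1 - n * δ) * colSup P j := by
      rw [← hrowQ i, Finset.sum_mul]
      exact Finset.sum_le_sum fun p _ =>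
        mul_le_mul_of_nonneg_left (le_colSup P p j) (sub_nonneg.2 (hδ i p))
    linarith
  have hlo : δ * S + (1 - n * δ) * colInf P j ≤ colInf (Q * P) j := by
    refine le_colInf fun i => ?_
    rw [hsplit i]
    have : (1 - n * δ) * colInf P j ≤ ∑ p, (Q i p - δ) * P p j := by
      rw [← hrowQ i, Finset.sum_mul]
      exact Finset.sum_le_sum fun p _ =>
        mul_le_mul_of_nonneg_left (colInf_le P p j) (sub_nonneg.2 (hδ i p))
    linarith
  linarith

lemma prod_mem_image (M : Finset (Matrix (Fin n) (Fin n) ℝ)) {N : ℕ}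
    (L : List (Matrix (Fin n) (Fin n) ℝ)) (h : ∀ B ∈ L, B ∈ M) (hl : L.length = N) :
    L.prod ∈ Finset.image
      (fun f : Fin N → {x // x ∈ M} =>
        (List.ofFn fun t => (f t : Matrix (Fin n) (Fin n) ℝ)).prod) Finset.univ := by
  subst hl
  refine Finset.mem_image.2 ⟨fun t => ⟨L.get t, h _ (List.get_mem L t)⟩, Finset.mem_univ _, ?_⟩
  simp [List.ofFn_get]


end Aux

theorem stmt17 {n : ℕ} (M : Finset (Matrix (Fin n) (Fin n) ℝ))
    (hstoch : ∀ B ∈ M, Stochastic B)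
    (herg : ∀ L : List (Matrix (Fin n) (Fin n) ℝ), (∀ B ∈ L, B ∈ M) → L ≠ [] →
      ∃ m, 1 ≤ m ∧ ∀ i j, 0 < (L.prod ^ m) i j)
    (A : ℕ → Matrix (Fin n) (Fin n) ℝ) (hA : ∀ k, 1 ≤ k → A k ∈ M) :
    ∃ L : Matrix (Fin n) (Fin n) ℝ, Stochastic L ∧ (∀ i i' j, L i j = L i' j) ∧
      ∀ i j, Tendsto (fun k => backProd A 0 k i j) atTop (nhds (L i j)) := by
  rcases Nat.eq_zero_or_pos n with rfl | hn
  · exact ⟨1, ⟨fun i => i.elim0, fun i => i.elim0⟩, fun i => i.elim0, fun i => i.elim0⟩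
  haveI : Nonempty (Fin n) := ⟨⟨0, hn⟩⟩
  have hAs : ∀ k, 1 ≤ k → Stochastic (A k) := fun k hk => hstoch _ (hA k hk)
  have hBP : ∀ l m, Stochastic (backProd A l m) := backProd_stoch A hAs
  -- the uniform positivity window
  obtain ⟨N, hN1, hNpos⟩ := keyA M hstoch herg
  set T := Finset.image
      (fun f : Fin N → {x // x ∈ M} =>
        (List.ofFn fun t => (f t : Matrix (Fin n) (Fin n) ℝ)).prod) Finset.univ with hT
  -- every window product lies in T
  have hwin : ∀ l, backProd A l N ∈ T := by
    intro l
    rw [backProd_eq_list]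
    refine prod_mem_image M _ ?_ (by simp)
    intro B hB
    simp only [List.mem_map, List.mem_reverse, List.mem_range] at hB
    obtain ⟨t, ht, rfl⟩ := hB
    exact hA _ (by omega)
  -- every element of T is positive
  have hTpos : ∀ P ∈ T, ∀ i j, 0 < P i j := by
    intro P hP
    rw [hT, Finset.mem_image] at hP
    obtain ⟨f, -, rfl⟩ := hP
    refine hNpos _ ?_ (by simp)
    intro B hB
    rw [List.mem_ofFn] at hB
    obtain ⟨t, rfl⟩ := hB
    exact (f t).2
  -- δ
  have hTne : T.Nonempty := ⟨_, hwin 0⟩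
  set δ := T.inf' hTne fun P => Finset.univ.inf' Finset.univ_nonempty
      fun p : Fin n × Fin n => P p.1 p.2 with hδdef
  have hδpos : 0 < δ := by
    rw [hδdef, Finset.lt_inf'_iff]
    intro P hP
    rw [Finset.lt_inf'_iff]
    intro p _
    exact hTpos P hP p.1 p.2
  have hδle : ∀ l i j, δ ≤ backProd A l N i j := by
    intro l i j
    refine le_trans (Finset.inf'_le _ (hwin l)) ?_
    exact Finset.inf'_le (fun p : Fin n × Fin n => backProd A l N p.1 p.2)
      (Finset.mem_univ (i, j))
  -- contraction constant
  set c := 1 - (n : ℝ) * δ with hc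
  have hc0 : 0 ≤ c := by
    have h1 : (1 : ℝ) = ∑ p, backProd A 0 N ⟨0, hn⟩ p := ((hBP 0 N).2 _).symm
    have h2 : (n : ℝ) * δ ≤ ∑ p, backProd A 0 N ⟨0, hn⟩ p := by
      calc (n : ℝ) * δ = ∑ _p : Fin n, δ := by
            rw [Finset.sum_const, Finset.card_univ, Fintype.card_fin, nsmul_eq_mul]
        _ ≤ _ := Finset.sum_le_sum fun p _ => hδle 0 _ p
    rw [hc]; linarith [h1 ▸ h2]
  have hc1 : c < 1 := by
    rw [hc]
    have : (0 : ℝ) < n * δ := by positivity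
    linarith
  -- monotonicity of column sups/infs
  have hg_anti : ∀ j, Antitone fun k => colSup (backProd A 0 k) j := by
    intro j
    refine antitone_nat_of_succ_le fun k => ?_
    have : backProd A 0 (k + 1) = A (k + 1) * backProd A 0 k := by
      rw [show backProd A 0 (k + 1) = A (0 + k + 1) * backProd A 0 k from rfl]
      norm_num
    rw [this]
    exact colSup_mul_le (hAs (k + 1) (by omega)) _ j
  have hm_mono : ∀ j, Monotone fun k => colInf (backProd A 0 k) j := by
    intro j
    refine monotone_nat_of_le_succ fun k => ?_
    have : backProd A 0 (k + 1) = A (k + 1) * backProd A 0 k := by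
      rw [show backProd A 0 (k + 1) = A (0 + k + 1) * backProd A 0 k from rfl]
      norm_num
    rw [this]
    exact le_colInf_mul (hAs (k + 1) (by omega)) _ j
  -- oscillation
  have hd0 : ∀ j k, 0 ≤ colSup (backProd A 0 k) j - colInf (backProd A 0 k) j := by
    intro j k
    have := le_trans (colInf_le (backProd A 0 k) (Classical.arbitrary _) j)
      (le_colSup (backProd A 0 k) (Classical.arbitrary _) j)
    linarith
  have hdN : ∀ j k, colSup (backProd A 0 (k + N)) j - colInf (backProd A 0 (k + N)) j ≤
      c * (colSup (backProd A 0 k) j - colInf (backProd A 0 k) j) := by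
    intro j k
    rw [backProd_add A k N]
    exact contract (hBP k N) (hδle k) _ j
  have hd_anti : ∀ j, Antitone fun k =>
      colSup (backProd A 0 k) j - colInf (backProd A 0 k) j := by
    intro j
    intro k k' hkk'
    exact sub_le_sub (hg_anti j hkk') (hm_mono j hkk')
  -- geometric decay
  have haux : ∀ j t, colSup (backProd A 0 (N * t)) j - colInf (backProd A 0 (N * t)) j ≤
      c ^ t * (colSup (backProd A 0 0) j - colInf (backProd A 0 0) j) := by
    intro j t
    induction t with
    | zero => simp
    | succ t ih =>
      have h1 : N * (t + 1) = N * t + N := by ring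
      rw [h1, pow_succ]
      calc _ ≤ c * (colSup (backProd A 0 (N * t)) j - colInf (backProd A 0 (N * t)) j) :=
            hdN j (N * t)
        _ ≤ c * (c ^ t * (colSup (backProd A 0 0) j - colInf (backProd A 0 0) j)) :=
            mul_le_mul_of_nonneg_left ih hc0
        _ = _ := by ring
  have hdle : ∀ j k, colSup (backProd A 0 k) j - colInf (backProd A 0 k) j ≤
      c ^ (k / N) * (colSup (backProd A 0 0) j - colInf (backProd A 0 0) j) := by
    intro j k
    refine le_trans (hd_anti j ?_) (haux j (k / N))
    calc N * (k / N) = k / N * N := by ring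
      _ ≤ k := Nat.div_mul_le_self k N
  -- oscillation tends to zero
  have hdiv : Tendsto (fun k : ℕ => k / N) atTop atTop := by
    refine tendsto_atTop_atTop.2 fun b => ⟨b * N, fun a ha => ?_⟩
    exact (Nat.le_div_iff_mul_le (by omega)).2 ha
  have hdtend : ∀ j, Tendsto (fun k =>
      colSup (backProd A 0 k) j - colInf (backProd A 0 k) j) atTop (nhds 0) := by
    intro j
    refine squeeze_zero (fun k => hd0 j k) (fun k => hdle j k) ?_
    have h1 : Tendsto (fun k : ℕ => c ^ (k / N)) atTop (nhds 0) :=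
      (tendsto_pow_atTop_nhds_zero_of_lt_one hc0 hc1).comp hdiv
    simpa using h1.mul_const _
  -- limits
  have hbdd : ∀ j, BddBelow (Set.range fun k => colSup (backProd A 0 k) j) := by
    intro j
    refine ⟨0, ?_⟩
    rintro x ⟨k, rfl⟩
    exact le_trans ((hBP 0 k).1 (Classical.arbitrary _) j)
      (le_colSup (backProd A 0 k) (Classical.arbitrary _) j)
  have hgtend : ∀ j, Tendsto (fun k => colSup (backProd A 0 k) j) atTop
      (nhds (⨅ k, colSup (backProd A 0 k) j)) :=
    fun j => tendsto_atTop_ciInf (hg_anti j) (hbdd j)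
  have hmtend : ∀ j, Tendsto (fun k => colInf (backProd A 0 k) j) atTop
      (nhds (⨅ k, colSup (backProd A 0 k) j)) := by
    intro j
    have := (hgtend j).sub (hdtend j)
    simp only [sub_zero] at this
    refine this.congr fun k => by ring
  -- entry convergence
  have hentry : ∀ i j, Tendsto (fun k => backProd A 0 k i j) atTop
      (nhds (⨅ k, colSup (backProd A 0 k) j)) := by
    intro i j
    refine tendsto_of_tendsto_of_tendsto_of_le_of_le (hmtend j) (hgtend j)
      (fun k => colInf_le (backProd A 0 k) i j) (fun k => le_colSup (backProd A 0 k) i j)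
  refine ⟨Matrix.of fun _ j => ⨅ k, colSup (backProd A 0 k) j, ⟨?_, ?_⟩, ?_, ?_⟩
  · intro i j
    simp only [Matrix.of_apply]
    refine le_ciInf fun k => ?_
    exact le_trans ((hBP 0 k).1 (Classical.arbitrary _) j)
      (le_colSup (backProd A 0 k) (Classical.arbitrary _) j)
  · intro i
    have h1 : Tendsto (fun k => ∑ j, backProd A 0 k i j) atTop
        (nhds (∑ j, (⨅ k, colSup (backProd A 0 k) j))) :=
      tendsto_finset_sum _ fun j _ => hentry i j
    have h2 : Tendsto (fun k => ∑ j, backProd A 0 k i j) atTop (nhds 1) := by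
      refine Tendsto.congr (fun k => ((hBP 0 k).2 i).symm) tendsto_const_nhds
    simpa only [Matrix.of_apply] using tendsto_nhds_unique h1 h2
  · intro i i' j
    rfl
  · intro i j
    simpa only [Matrix.of_apply] using hentry i j
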